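/- Beurling-type theorem: if M is a nonzero closed subspace of H with T_{α,β} M ⊆ M, then the wandering subspace M ⊖ T_{α,β} M is one-dimensional. (Here T_{α,β} M = {T_{α,β}x : x ∈ M} is automatically closed, since T_{α,β} is bounded below.) -/

import Mathlib

open scoped ComplexConjugate ENNReal
open MeasureTheory

noncomputable section

/-- The Hilbert space `H = ℓ²(ℕ, ℂ)`. -/
abbrev H : Type := lp (fun _ : ℕ => ℂ) 2

/-- The standard orthonormal basis vectors of `ℓ²(ℕ, ℂ)`. -/
noncomputable def e (n : ℕ) : H := lp.single 2 n (1 : ℂ)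

namespace Beurling

local notation "⟪" x ", " y "⟫" => @inner ℂ _ _ x y

lemma two_toReal : ((2:ℝ≥0∞)).toReal = 2 := by norm_num
lemma two_toReal_pos : (0:ℝ) < ((2:ℝ≥0∞)).toReal := by rw [two_toReal]; norm_num

/-- Make an element of `H` from a function and a membership proof. -/
def lpmk (f : ℕ → ℂ) (hf : Memℓp f 2) : H := ⟨f, hf⟩

@[simp] lemma lpmk_apply (f : ℕ → ℂ) (hf : Memℓp f 2) (k : ℕ) : (lpmk f hf) k = f k := rfl

lemma summable_sq (x : H) : Summable fun k => ‖x k‖ ^ ((2:ℝ≥0∞)).toReal :=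
  (memℓp_gen_iff two_toReal_pos).1 (lp.memℓp x)

@[simp] lemma e_apply_self (n : ℕ) : (e n) n = 1 := lp.single_apply_self 2 n 1

lemma e_apply_ne {n m : ℕ} (h : m ≠ n) : (e n) m = 0 := lp.single_apply_ne 2 n 1 h

lemma norm_e (n : ℕ) : ‖e n‖ = 1 := by
  have := lp.norm_single (E := fun _ : ℕ => ℂ) (by norm_num : (0:ℝ≥0∞) < 2) n (1:ℂ)
  simpa [e] using this

lemma hasSum_e (x : H) : HasSum (fun n => x n • e n) x := by
  have h := lp.hasSum_single (by norm_num : (2:ℝ≥0∞) ≠ ⊤) x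
  have : ∀ n : ℕ, lp.single 2 n (x n) = x n • e n := by
    intro n
    have h2 := lp.single_smul (E := fun _ : ℕ => ℂ) 2 n (x n) (1:ℂ)
    rw [e, ← h2, smul_eq_mul, mul_one]
  simpa [this] using h

/-- Two continuous linear maps agreeing on all basis vectors agree. -/
lemma clm_ext_basis {A B : H →L[ℂ] H} (h : ∀ n, A (e n) = B (e n)) : A = B := by
  apply ContinuousLinearMap.ext
  intro x
  have hA := A.hasSum (hasSum_e x)
  have hB := B.hasSum (hasSum_e x)
  simp only [_root_.map_smul] at hA hB
  simp only [h] at hA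
  exact hA.unique hB

/-! ### The shift and backward shift -/

/-- The underlying function of the forward shift. -/
def shiftFun (x : ℕ → ℂ) : ℕ → ℂ := fun k => match k with | 0 => 0 | (k+1) => x k

@[simp] lemma shiftFun_zero (x : ℕ → ℂ) : shiftFun x 0 = 0 := rfl
@[simp] lemma shiftFun_succ (x : ℕ → ℂ) (k : ℕ) : shiftFun x (k+1) = x k := rfl

lemma shift_memℓp (x : H) : Memℓp (shiftFun x) 2 := by
  rw [memℓp_gen_iff two_toReal_pos]
  apply (summable_nat_add_iff 1).1
  simpa using summable_sq x

/-- The forward shift as a linear isometry. -/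
def Vli : H →ₗᵢ[ℂ] H where
  toLinearMap :=
  { toFun := fun x => lpmk (shiftFun x) (shift_memℓp x)
    map_add' := by
      intro x y
      apply lp.ext
      funext k
      have : ((x + y : H) : ℕ → ℂ) = (x : ℕ → ℂ) + y := lp.coeFn_add x y
      cases k <;> simp [this, lp.coeFn_add, lpmk] <;> erw [Pi.add_apply] <;> simp
    map_smul' := by
      intro c x
      apply lp.ext
      funext k
      have : ((c • x : H) : ℕ → ℂ) = c • (x : ℕ → ℂ) := lp.coeFn_smul c x
      cases k <;> simp [this, lpmk] }
  norm_map' := by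
    intro x
    change ‖lpmk (shiftFun x) (shift_memℓp x)‖ = ‖x‖
    have h1 := lp.norm_rpow_eq_tsum two_toReal_pos (lpmk (shiftFun x) (shift_memℓp x))
    have h2 := lp.norm_rpow_eq_tsum two_toReal_pos x
    have hsum : Summable fun k => ‖shiftFun x k‖ ^ ((2:ℝ≥0∞)).toReal :=
      (memℓp_gen_iff two_toReal_pos).1 (shift_memℓp x)
    have h3 : ∑' k, ‖shiftFun (x : ℕ → ℂ) k‖ ^ ((2:ℝ≥0∞)).toReal
        = ∑' k, ‖x k‖ ^ ((2:ℝ≥0∞)).toReal := by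
      rw [Summable.tsum_eq_zero_add hsum]
      simp [Real.zero_rpow (ne_of_gt two_toReal_pos)]
    apply Real.rpow_left_injOn (ne_of_gt two_toReal_pos) (Set.mem_setOf_eq ▸ norm_nonneg _)
      (Set.mem_setOf_eq ▸ norm_nonneg _)
    show ‖_‖ ^ _ = ‖_‖ ^ _
    rw [h1, h2]
    simpa only [lpmk_apply] using h3

/-- The forward shift as a continuous linear map. -/
def Vc : H →L[ℂ] H := Vli.toContinuousLinearMap

@[simp] lemma Vc_apply_zero (x : H) : (Vc x) 0 = 0 := rfl
@[simp] lemma Vc_apply_succ (x : H) (k : ℕ) : (Vc x) (k+1) = x k := rfl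

lemma V_e (n : ℕ) : Vc (e n) = e (n+1) := by
  apply lp.ext
  funext k
  cases k with
  | zero => simp [e_apply_ne (Nat.succ_ne_zero n).symm]
  | succ k =>
      by_cases h : k = n
      · subst h; simp
      · rw [Vc_apply_succ, e_apply_ne h, e_apply_ne (by omega)]

lemma Vpow_coord (n : ℕ) (x : H) (k : ℕ) :
    ((Vc ^ n) x) k = if k < n then 0 else x (k - n) := by
  induction n generalizing x k with
  | zero => simp
  | succ n ih =>
      rw [pow_succ, ContinuousLinearMap.mul_apply, ih (Vc x) k]
      by_cases h : k < n
      · rw [if_pos h, if_pos (by omega)]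
      · rw [if_neg h]
        by_cases h2 : k < n + 1
        · have : k - n = 0 := by omega
          rw [this, Vc_apply_zero, if_pos h2]
        · have : k - n = (k - (n+1)) + 1 := by omega
          rw [this, Vc_apply_succ, if_neg h2]

/-- The backward shift. -/
def adjFun (x : ℕ → ℂ) : ℕ → ℂ := fun k => x (k+1)

lemma adj_memℓp (x : H) : Memℓp (adjFun x) 2 := by
  rw [memℓp_gen_iff two_toReal_pos]
  exact (summable_nat_add_iff 1).2 (summable_sq x)

def Vadjlin : H →ₗ[ℂ] H where
  toFun := fun x => lpmk (adjFun x) (adj_memℓp x)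
  map_add' := by
    intro x y
    apply lp.ext
    funext k
    have : ((x + y : H) : ℕ → ℂ) = (x : ℕ → ℂ) + y := lp.coeFn_add x y
    simp [this, adjFun, lpmk]
    erw [Pi.add_apply]
    rfl
  map_smul' := by
    intro c x
    apply lp.ext
    funext k
    have : ((c • x : H) : ℕ → ℂ) = c • (x : ℕ → ℂ) := lp.coeFn_smul c x
    simp [this, adjFun, lpmk]

lemma Vadjlin_bound (x : H) : ‖Vadjlin x‖ ≤ 1 * ‖x‖ := by
  rw [one_mul]
  have h1 := lp.norm_rpow_eq_tsum two_toReal_pos (Vadjlin x)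
  have h2 := lp.norm_rpow_eq_tsum two_toReal_pos x
  have hkey : ∑' k, ‖x (k+1)‖ ^ ((2:ℝ≥0∞)).toReal ≤ ∑' k, ‖x k‖ ^ ((2:ℝ≥0∞)).toReal := by
    rw [Summable.tsum_eq_zero_add (summable_sq x)]
    exact le_add_of_nonneg_left (Real.rpow_nonneg (norm_nonneg _) _)
  rw [← Real.rpow_le_rpow_iff (norm_nonneg _) (norm_nonneg _) two_toReal_pos, h1, h2]
  exact hkey

/-- The backward shift as a continuous linear map. -/
def Vadjc : H →L[ℂ] H := Vadjlin.mkContinuous 1 Vadjlin_bound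

lemma norm_Vadjc_le : ‖Vadjc‖ ≤ 1 := LinearMap.mkContinuous_norm_le _ zero_le_one _

@[simp] lemma Vadjc_apply (x : H) (k : ℕ) : (Vadjc x) k = x (k+1) := rfl

lemma Vadj_e_zero : Vadjc (e 0) = 0 := by
  apply lp.ext
  funext k
  have : (0 : H) k = 0 := rfl
  rw [this, Vadjc_apply, e_apply_ne (Nat.succ_ne_zero k)]

lemma Vadj_e_succ (n : ℕ) : Vadjc (e (n+1)) = e n := by
  apply lp.ext
  funext k
  rw [Vadjc_apply]
  by_cases h : k = n
  · subst h; simp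
  · rw [e_apply_ne (by omega), e_apply_ne h]


/-! ### The rank-one operator and the similarity -/

def E0lin : H →ₗ[ℂ] H where
  toFun := fun x => x 0 • e 0
  map_add' := by
    intro x y
    have : ((x + y : H) : ℕ → ℂ) = (x : ℕ → ℂ) + y := lp.coeFn_add x y
    simp [this, add_smul]
  map_smul' := by
    intro c x
    have : ((c • x : H) : ℕ → ℂ) = c • (x : ℕ → ℂ) := lp.coeFn_smul c x
    simp [this, smul_smul]

def E0 : H →L[ℂ] H := E0lin.mkContinuous 1 (by
  intro x
  have h1 : ‖E0lin x‖ = ‖x 0‖ * ‖e 0‖ := norm_smul _ _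
  rw [h1, norm_e, mul_one, one_mul]
  exact lp.norm_apply_le_norm (by norm_num) x 0)

@[simp] lemma E0_apply (x : H) : E0 x = x 0 • e 0 := rfl

lemma E0_mul_E0 : E0 * E0 = E0 := by
  apply ContinuousLinearMap.ext
  intro x
  have : ((x 0 • e 0 : H) : ℕ → ℂ) 0 = x 0 • ((e 0 : H) : ℕ → ℂ) 0 := by
    rw [lp.coeFn_smul]; rfl
  simp only [ContinuousLinearMap.mul_apply, E0_apply]
  rw [this]
  simp

/-- The operator `A = β•1 + (1-β)•E0`. -/
def Ac (b : ℂ) : H →L[ℂ] H := b • 1 + (1-b) • E0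

lemma Ac_apply (b : ℂ) (x : H) : Ac b x = b • x + ((1-b) * x 0) • e 0 := by
  simp [Ac, mul_smul]

lemma Ac_mul (b c : ℂ) : Ac b * Ac c = Ac (b * c) := by
  simp only [Ac, mul_add, add_mul, smul_mul_smul_comm, one_mul, mul_one, E0_mul_E0]
  module

lemma Ac_one : Ac 1 = 1 := by simp [Ac]

/-- `A` as a unit, for `b ≠ 0`. -/
def Au (b : ℂ) (hb : b ≠ 0) : (H →L[ℂ] H)ˣ where
  val := Ac b
  inv := Ac b⁻¹
  val_inv := by rw [Ac_mul, mul_inv_cancel₀ hb, Ac_one]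
  inv_val := by rw [Ac_mul, inv_mul_cancel₀ hb, Ac_one]

section Sim

variable (l : ℂ)

lemma norm_lV_lt (hl : ‖l‖ < 1) : ‖l • Vadjc‖ < 1 := by
  have h : ‖l • Vadjc‖ = ‖l‖ * ‖Vadjc‖ := norm_smul l Vadjc
  rw [h]
  calc ‖l‖ * ‖Vadjc‖ ≤ ‖l‖ * 1 := by
        apply mul_le_mul_of_nonneg_left norm_Vadjc_le (norm_nonneg _)
    _ = ‖l‖ := mul_one _
    _ < 1 := hl

/-- The unit `1 - l•V*`. -/
def uU (hl : ‖l‖ < 1) : (H →L[ℂ] H)ˣ := Units.oneSub (l • Vadjc) (norm_lV_lt l hl)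

lemma uU_val (hl : ‖l‖ < 1) : (uU l hl : H →L[ℂ] H) = 1 - l • Vadjc := rfl

/-- The sequence `m n = Σ_{k≤n} l^k e_{n-k}`. -/
def mseq : ℕ → H
  | 0 => e 0
  | (n+1) => e (n+1) + l • mseq n

lemma mseq_zero_coord : ∀ n, (mseq l n) 0 = l ^ n := by
  intro n
  induction n with
  | zero => simp [mseq]
  | succ n ih =>
      have h1 : ((e (n+1) + l • mseq l n : H) : ℕ → ℂ) 0
          = (e (n+1)) 0 + l • ((mseq l n : H) : ℕ → ℂ) 0 := by
        rw [lp.coeFn_add, Pi.add_apply, lp.coeFn_smul]; rfl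
      rw [mseq, h1, e_apply_ne (Nat.succ_ne_zero n).symm, ih]
      simp [pow_succ]
      ring

lemma u_mseq (hl : ‖l‖ < 1) (n : ℕ) : (uU l hl : H →L[ℂ] H) (mseq l n) = e n := by
  induction n with
  | zero =>
      rw [uU_val]
      simp only [ContinuousLinearMap.sub_apply, ContinuousLinearMap.one_apply,
        ContinuousLinearMap.smul_apply, mseq, Vadj_e_zero, smul_zero, sub_zero]
  | succ n ih =>
      rw [uU_val] at ih ⊢
      have hV : Vadjc (mseq l (n+1)) = e n + l • Vadjc (mseq l n) := by
        rw [mseq, map_add, _root_.map_smul, Vadj_e_succ]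
      simp only [ContinuousLinearMap.sub_apply, ContinuousLinearMap.smul_apply,
        ContinuousLinearMap.one_apply] at ih ⊢
      have key : l • mseq l n - l • (l • Vadjc (mseq l n)) = l • e n := by
        rw [← smul_sub, ih]
      rw [hV, mseq, smul_add, ← key]
      abel

lemma uinv_e (hl : ‖l‖ < 1) (n : ℕ) : ((uU l hl)⁻¹ : (H →L[ℂ] H)ˣ).1 (e n) = mseq l n := by
  conv_lhs => rw [← u_mseq l hl n]
  rw [← ContinuousLinearMap.mul_apply, Units.inv_mul, ContinuousLinearMap.one_apply]

end Sim


/-! ### Conjugation of `T` to the shift -/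

section Conj

variable (b l : ℂ)

/-- The similarity `Q = A ∘ (1 - l V*)⁻¹`. -/
def Qu (hb : b ≠ 0) (hl : ‖l‖ < 1) : (H →L[ℂ] H)ˣ := (Au b hb) * (uU l hl)⁻¹

lemma Qc_e (hb : b ≠ 0) (hl : ‖l‖ < 1) (n : ℕ) :
    (Qu b l hb hl : H →L[ℂ] H) (e n) = Ac b (mseq l n) := by
  rw [Qu, Units.val_mul, ContinuousLinearMap.mul_apply]
  congr 1
  exact uinv_e l hl n

lemma Ac_e_succ (n : ℕ) : Ac b (e (n+1)) = b • e (n+1) := by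
  rw [Ac_apply, e_apply_ne (Nat.succ_ne_zero n).symm]
  simp

lemma T_Ac_mseq (T : H →L[ℂ] H) (hT0 : T (e 0) = l • e 0 + b • e 1)
    (hTn : ∀ n : ℕ, 1 ≤ n → T (e n) = e (n + 1)) (n : ℕ) :
    T (Ac b (mseq l n)) = Ac b (mseq l (n+1)) := by
  induction n with
  | zero =>
      have h0 : Ac b (mseq l 0) = e 0 := by
        show Ac b (e 0) = e 0
        rw [Ac_apply, e_apply_self, mul_one, ← add_smul]
        simp
      have h1 : Ac b (mseq l 1) = b • e 1 + l • e 0 := by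
        show Ac b (e 1 + l • e 0) = b • e 1 + l • e 0
        rw [map_add, _root_.map_smul, Ac_e_succ]
        have : Ac b (e 0) = e 0 := by
          rw [Ac_apply, e_apply_self, mul_one, ← add_smul]
          simp
        rw [this]
      rw [h0, h1, hT0]
      abel
  | succ n ih =>
      have hm : mseq l (n+2) = e (n+2) + l • mseq l (n+1) := rfl
      have hm1 : mseq l (n+1) = e (n+1) + l • mseq l n := rfl
      calc T (Ac b (mseq l (n+1)))
          = T (Ac b (e (n+1))) + l • T (Ac b (mseq l n)) := by
            rw [hm1, map_add, _root_.map_smul, map_add, _root_.map_smul]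
        _ = b • e (n+2) + l • Ac b (mseq l (n+1)) := by
            rw [ih, Ac_e_succ, _root_.map_smul, hTn (n+1) (by omega)]
        _ = Ac b (mseq l (n+2)) := by
            rw [hm, map_add, _root_.map_smul, Ac_e_succ]

lemma TQ_comm (hb : b ≠ 0) (hl : ‖l‖ < 1) (T : H →L[ℂ] H)
    (hT0 : T (e 0) = l • e 0 + b • e 1)
    (hTn : ∀ n : ℕ, 1 ≤ n → T (e n) = e (n + 1)) (x : H) :
    T ((Qu b l hb hl : H →L[ℂ] H) x) = (Qu b l hb hl : H →L[ℂ] H) (Vc x) := by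
  have : T.comp (Qu b l hb hl : H →L[ℂ] H) = (Qu b l hb hl : H →L[ℂ] H).comp Vc := by
    apply clm_ext_basis
    intro n
    rw [ContinuousLinearMap.comp_apply, ContinuousLinearMap.comp_apply, V_e, Qc_e, Qc_e,
      T_Ac_mseq b l T hT0 hTn n]
  calc T ((Qu b l hb hl : H →L[ℂ] H) x) = (T.comp (Qu b l hb hl : H →L[ℂ] H)) x := rfl
    _ = ((Qu b l hb hl : H →L[ℂ] H).comp Vc) x := by rw [this]
    _ = (Qu b l hb hl : H →L[ℂ] H) (Vc x) := rfl

end Conj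


/-! ### Fourier analysis on the circle -/

section Circle

open AddCircle

instance fact01 : Fact ((0:ℝ) < 1) := ⟨one_pos⟩

/-- Haar measure on the circle of circumference 1. -/
abbrev μc : Measure (AddCircle (1:ℝ)) := haarAddCircle

lemma norm_fourier_apply (n : ℤ) (t : AddCircle (1:ℝ)) : ‖fourier n t‖ = 1 := by
  rw [fourier_apply]
  exact Circle.norm_coe _

lemma integral_fourier {n : ℤ} (hn : n ≠ 0) : ∫ t, fourier n t ∂μc = 0 := by
  have h := orthonormal_fourier (T := 1)
  have h2 : @inner ℂ _ _ (fourierLp (T := 1) 2 0) (fourierLp (T := 1) 2 n) = 0 :=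
    h.2 (Ne.symm hn)
  rw [L2.inner_def] at h2
  have hae : (fun a => @inner ℂ _ _ ((fourierLp (T := 1) 2 0 : Lp ℂ 2 μc) a)
      ((fourierLp (T := 1) 2 n : Lp ℂ 2 μc) a)) =ᵐ[μc] fun a => fourier n a := by
    filter_upwards [coeFn_fourierLp (T := 1) 2 0, coeFn_fourierLp (T := 1) 2 n] with a h0 hn'
    rw [h0, hn', RCLike.inner_apply', fourier_zero, map_one, one_mul]
  rw [integral_congr_ae hae] at h2
  exact h2

lemma integrable_contMul {h : AddCircle (1:ℝ) → ℂ} (hi : Integrable h μc)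
    (φ : C(AddCircle (1:ℝ), ℂ)) : Integrable (fun t => φ t * h t) μc :=
  hi.bdd_mul φ.continuous.aestronglyMeasurable (ae_of_all _ fun t => φ.norm_coe_le_norm t)

/-- An integrable function on the circle all of whose Fourier coefficients vanish is a.e. zero. -/
lemma ae_zero_of_forall_fourier {h : AddCircle (1:ℝ) → ℂ} (hi : Integrable h μc)
    (hc : ∀ m : ℤ, ∫ t, fourier m t * h t ∂μc = 0) : h =ᵐ[μc] 0 := by
  have hCont : ∀ φ : C(AddCircle (1:ℝ), ℂ), ∫ t, φ t * h t ∂μc = 0 := by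
    set Lf : C(AddCircle (1:ℝ), ℂ) →ₗ[ℂ] ℂ :=
      { toFun := fun φ => ∫ t, φ t * h t ∂μc
        map_add' := by
          intro φ ψ
          show (∫ t, (φ + ψ) t * h t ∂μc) = (∫ t, φ t * h t ∂μc) + ∫ t, ψ t * h t ∂μc
          simp only [ContinuousMap.add_apply, add_mul]
          exact integral_add (integrable_contMul hi φ) (integrable_contMul hi ψ)
        map_smul' := by
          intro c φ
          show (∫ t, (c • φ) t * h t ∂μc) = c • ∫ t, φ t * h t ∂μc
          rw [← integral_smul]
          simp only [ContinuousMap.coe_smul, Pi.smul_apply, smul_eq_mul, mul_assoc] } with hLf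
    have hLb : ∀ φ : C(AddCircle (1:ℝ), ℂ), ‖Lf φ‖ ≤ (∫ t, ‖h t‖ ∂μc) * ‖φ‖ := by
      intro φ
      have h1 : ‖Lf φ‖ ≤ ∫ t, ‖φ t * h t‖ ∂μc := norm_integral_le_integral_norm _
      have h2 : ∫ t, ‖φ t * h t‖ ∂μc ≤ ∫ t, ‖φ‖ * ‖h t‖ ∂μc := by
        apply integral_mono (integrable_contMul hi φ).norm (hi.norm.const_mul _)
        intro t
        dsimp only
        rw [norm_mul]
        exact mul_le_mul_of_nonneg_right (φ.norm_coe_le_norm t) (norm_nonneg _)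
      have h3 : ∫ t, ‖φ‖ * ‖h t‖ ∂μc = ‖φ‖ * ∫ t, ‖h t‖ ∂μc := integral_const_mul _ _
      calc ‖Lf φ‖ ≤ ∫ t, ‖φ t * h t‖ ∂μc := h1
        _ ≤ ∫ t, ‖φ‖ * ‖h t‖ ∂μc := h2
        _ = (∫ t, ‖h t‖ ∂μc) * ‖φ‖ := by rw [h3, mul_comm]
    set Lc : C(AddCircle (1:ℝ), ℂ) →L[ℂ] ℂ := LinearMap.mkContinuous Lf _ hLb with hLc
    have hdense : Dense ((Submodule.span ℂ (Set.range (@fourier 1))) : Set C(AddCircle (1:ℝ), ℂ)) :=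
      Submodule.dense_iff_topologicalClosure_eq_top.2 span_fourier_closure_eq_top
    have hzero : Set.EqOn (fun φ => Lc φ) (fun _ => (0:ℂ))
        ((Submodule.span ℂ (Set.range (@fourier 1))) : Set C(AddCircle (1:ℝ), ℂ)) := by
      intro φ hφ
      induction hφ using Submodule.span_induction with
      | mem ψ hψ =>
          obtain ⟨m, rfl⟩ := hψ
          exact hc m
      | zero => simp
      | add ψ χ hψ hχ ihψ ihχ =>
          show Lc (ψ + χ) = 0
          rw [map_add]
          have h1 : Lc ψ = 0 := ihψ
          have h2 : Lc χ = 0 := ihχ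
          rw [h1, h2, add_zero]
      | smul c ψ hψ ihψ =>
          show Lc (c • ψ) = 0
          rw [_root_.map_smul]
          have h1 : Lc ψ = 0 := ihψ
          rw [h1, smul_zero]
    have hext : (fun φ => Lc φ) = (fun _ => (0:ℂ)) :=
      Continuous.ext_on hdense Lc.continuous continuous_const hzero
    intro φ
    exact congrFun hext φ
  have hClosed : ∀ s : Set (AddCircle (1:ℝ)), IsClosed s → ∫ t in s, h t ∂μc = 0 := by
    intro s hs
    rcases s.eq_empty_or_nonempty with rfl | hne
    · simp
    · set φn : ℕ → C(AddCircle (1:ℝ), ℂ) := fun n =>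
        ⟨fun t => ((max 0 (1 - n * Metric.infDist t s) : ℝ) : ℂ),
          Complex.continuous_ofReal.comp
            (continuous_const.max (continuous_const.sub
              (continuous_const.mul (Metric.continuous_infDist_pt s))))⟩ with hφn
      have hφn_apply : ∀ n t, φn n t = ((max 0 (1 - n * Metric.infDist t s) : ℝ) : ℂ) :=
        fun n t => rfl
      have hφn_le : ∀ n t, ‖φn n t‖ ≤ 1 := by
        intro n t
        rw [hφn_apply, Complex.norm_real, Real.norm_eq_abs,
          abs_of_nonneg (le_max_left _ _)]
        apply max_le zero_le_one
        have : (0:ℝ) ≤ n * Metric.infDist t s :=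
          mul_nonneg (Nat.cast_nonneg n) Metric.infDist_nonneg
        linarith
      have htend : Filter.Tendsto (fun n => ∫ t, φn n t * h t ∂μc) Filter.atTop
          (nhds (∫ t, s.indicator h t ∂μc)) := by
        apply tendsto_integral_of_dominated_convergence (bound := fun t => ‖h t‖)
        · intro n
          exact (φn n).continuous.aestronglyMeasurable.mul hi.aestronglyMeasurable
        · exact hi.norm
        · intro n
          filter_upwards with t
          rw [norm_mul]
          calc ‖φn n t‖ * ‖h t‖ ≤ 1 * ‖h t‖ :=
                mul_le_mul_of_nonneg_right (hφn_le n t) (norm_nonneg _)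
            _ = ‖h t‖ := one_mul _
        · filter_upwards with t
          by_cases hts : t ∈ s
          · have hd : Metric.infDist t s = 0 := Metric.infDist_zero_of_mem hts
            have hconst : ∀ n : ℕ, φn n t * h t = h t := by
              intro n
              rw [hφn_apply, hd]
              norm_num
            rw [Set.indicator_of_mem hts]
            simp only [hconst]
            exact tendsto_const_nhds
          · have hd : 0 < Metric.infDist t s := by
              rcases eq_or_lt_of_le (Metric.infDist_nonneg (s := s) (x := t)) with heq | hlt
              · exfalso
                exact hts (((hs.mem_iff_infDist_zero hne).2 heq.symm))
              · exact hlt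
            rw [Set.indicator_of_notMem hts]
            apply Filter.Tendsto.congr' _ tendsto_const_nhds
            filter_upwards [Filter.eventually_ge_atTop ⌈(Metric.infDist t s)⁻¹⌉₊] with n hn
            have h1 : (1:ℝ) ≤ n * Metric.infDist t s := by
              have h2 : (Metric.infDist t s)⁻¹ ≤ (n:ℝ) := by
                calc (Metric.infDist t s)⁻¹ ≤ (⌈(Metric.infDist t s)⁻¹⌉₊ : ℝ) := Nat.le_ceil _
                  _ ≤ (n:ℝ) := by exact_mod_cast hn
              calc (1:ℝ) = (Metric.infDist t s)⁻¹ * Metric.infDist t s := by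
                    field_simp
                _ ≤ (n:ℝ) * Metric.infDist t s :=
                    mul_le_mul_of_nonneg_right h2 (le_of_lt hd)
            have h2 : max 0 (1 - (n:ℝ) * Metric.infDist t s) = 0 :=
              max_eq_left (by linarith)
            rw [hφn_apply, h2]
            norm_num
      have hzero : (fun n => ∫ t, φn n t * h t ∂μc) = fun _ => (0:ℂ) :=
        funext fun n => hCont (φn n)
      rw [hzero] at htend
      have huniq := tendsto_nhds_unique htend tendsto_const_nhds
      rw [integral_indicator hs.measurableSet] at huniq
      exact huniq

  have htot : ∫ t, h t ∂μc = 0 := by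
    have := hCont 1
    simpa using this
  have hgen : (inferInstance : MeasurableSpace (AddCircle (1:ℝ)))
      = MeasurableSpace.generateFrom {s : Set (AddCircle (1:ℝ)) | IsClosed s} := by
    rw [BorelSpace.measurable_eq (α := AddCircle (1:ℝ)), borel_eq_generateFrom_isClosed]
  have hpi : IsPiSystem {s : Set (AddCircle (1:ℝ)) | IsClosed s} := by
    intro s hs t ht _
    exact hs.inter ht
  have hAll : ∀ s : Set (AddCircle (1:ℝ)), MeasurableSet s → ∫ t in s, h t ∂μc = 0 := by
    intro s hms
    refine MeasurableSpace.induction_on_inter (C := fun s _ => ∫ t in s, h t ∂μc = 0)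
      hgen hpi ?_ ?_ ?_ ?_ s hms
    · simp
    · exact fun t ht => hClosed t ht
    · intro t hmt hct
      have hsplit := integral_add_compl hmt hi
      rw [hct, zero_add, htot] at hsplit
      exact hsplit
    · intro f hd hm hC
      rw [integral_iUnion hm hd hi.integrableOn]
      simp [hC]
  exact ae_eq_zero_of_forall_setIntegral_eq_of_sigmaFinite
    (fun s _ _ => hi.integrableOn) (fun s hs _ => hAll s hs)

/-- An integrable function whose nonzero Fourier coefficients vanish is a.e. constant. -/
lemma ae_const_of_fourierCoeff {h : AddCircle (1:ℝ) → ℂ} (hi : Integrable h μc)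
    (hc : ∀ n : ℤ, n ≠ 0 → fourierCoeff h n = 0) :
    h =ᵐ[μc] fun _ => fourierCoeff h 0 := by
  set c := fourierCoeff h 0 with hcdef
  have h2 : ∀ m : ℤ, ∫ t, fourier m t * (h t - c) ∂μc = 0 := by
    intro m
    have hint1 : Integrable (fun t => fourier m t * h t) μc := integrable_contMul hi (fourier m)
    have hint2 : Integrable (fun t => fourier m t * c) μc :=
      (integrable_const c).bdd_mul (fourier m).continuous.aestronglyMeasurable
        (ae_of_all _ fun t => le_of_eq (norm_fourier_apply m t))
    have hfun : (fun t => fourier m t * (h t - c)) = fun t => fourier m t * h t - fourier m t * c := by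
      funext t; ring
    rw [hfun, integral_sub hint1 hint2]
    have hfst : ∫ t, fourier m t * h t ∂μc = fourierCoeff h (-m) := by
      rw [fourierCoeff]
      congr 1; funext t
      rw [neg_neg, smul_eq_mul]
    by_cases hm : m = 0
    · subst hm
      have ha : ∫ t, fourier (0:ℤ) t * h t ∂μc = c := by
        have hfun2 : (fun t => fourier (0:ℤ) t * h t) = h := by
          funext t; rw [fourier_zero, one_mul]
        rw [hfun2, hcdef, fourierCoeff]
        congr 1; funext t
        rw [neg_zero, fourier_zero, one_smul]
      have hb : ∫ t, fourier (0:ℤ) t * c ∂μc = c := by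
        have hfun2 : (fun t : AddCircle (1:ℝ) => fourier (0:ℤ) t * c) = fun _ => c := by
          funext t; rw [fourier_zero, one_mul]
        rw [hfun2, integral_const]
        simp
      rw [ha, hb, sub_self]
    · rw [hfst, hc (-m) (by simpa using hm)]
      have hsnd : ∫ t, fourier m t * c ∂μc = (∫ t, fourier m t ∂μc) * c := integral_mul_const _ _
      rw [hsnd, integral_fourier hm, zero_mul, sub_zero]
  have hae := ae_zero_of_forall_fourier (hi.sub (integrable_const c)) h2
  filter_upwards [hae] with t ht
  have : h t - c = 0 := ht
  exact sub_eq_zero.1 this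

end Circle


/-! ### Embedding `ℓ²(ℕ)` into `L²` of the circle -/

section Embed

open AddCircle

def zfun (x : ℕ → ℂ) : ℤ → ℂ := fun m => if 0 ≤ m then x m.toNat else 0

@[simp] lemma zfun_apply (x : ℕ → ℂ) (m : ℤ) :
    zfun x m = if 0 ≤ m then x m.toNat else 0 := rfl

def lpmkZ (f : ℤ → ℂ) (hf : Memℓp f 2) : lp (fun _ : ℤ => ℂ) 2 := ⟨f, hf⟩

@[simp] lemma lpmkZ_apply (f : ℤ → ℂ) (hf : Memℓp f 2) (m : ℤ) : (lpmkZ f hf) m = f m := rfl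

lemma intNat_inj : Function.Injective (Int.ofNat) := fun a b hab => Int.ofNat.inj hab

lemma zfun_supp (x : H) :
    ∀ m : ℤ, m ∉ Set.range (Int.ofNat) → ‖zfun x m‖ ^ ((2:ℝ≥0∞)).toReal = 0 := by
  intro m hm
  have hneg : ¬ (0 ≤ m) := by
    intro h
    refine hm ⟨m.toNat, ?_⟩
    rw [Int.ofNat_eq_natCast]
    exact Int.toNat_of_nonneg h
  rw [zfun_apply, if_neg hneg, norm_zero, Real.zero_rpow (ne_of_gt two_toReal_pos)]

lemma zfun_memℓp (x : H) : Memℓp (zfun x) 2 := by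
  rw [memℓp_gen_iff two_toReal_pos]
  refine (Function.Injective.summable_iff intNat_inj (zfun_supp x)).1 ?_
  have heq : ((fun m : ℤ => ‖zfun x m‖ ^ ((2:ℝ≥0∞)).toReal) ∘ Int.ofNat)
      = fun n : ℕ => ‖x n‖ ^ ((2:ℝ≥0∞)).toReal := by
    funext n
    simp [Function.comp, Int.ofNat_eq_natCast, Int.toNat_natCast]
  rw [heq]
  exact summable_sq x

def zextli : H →ₗᵢ[ℂ] lp (fun _ : ℤ => ℂ) 2 where
  toLinearMap :=
  { toFun := fun x => lpmkZ (zfun x) (zfun_memℓp x)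
    map_add' := by
      intro x y
      apply lp.ext
      funext m
      rw [lp.coeFn_add (lpmkZ _ (zfun_memℓp x)) (lpmkZ _ (zfun_memℓp y))]
      show zfun (x + y : H) m = zfun x m + zfun y m
      rw [zfun_apply, zfun_apply, zfun_apply,
        show ((x + y : H) : ℕ → ℂ) = (x : ℕ → ℂ) + y from lp.coeFn_add x y]
      split_ifs <;> simp
    map_smul' := by
      intro c x
      apply lp.ext
      funext m
      rw [lp.coeFn_smul _ (lpmkZ _ (zfun_memℓp x))]
      show zfun (c • x : H) m = c • zfun x m
      rw [zfun_apply, zfun_apply,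
        show ((c • x : H) : ℕ → ℂ) = c • (x : ℕ → ℂ) from lp.coeFn_smul c x]
      split_ifs <;> simp }
  norm_map' := by
    intro x
    change ‖lpmkZ (zfun x) (zfun_memℓp x)‖ = ‖x‖
    apply Real.rpow_left_injOn (ne_of_gt two_toReal_pos) (Set.mem_setOf_eq ▸ norm_nonneg _)
      (Set.mem_setOf_eq ▸ norm_nonneg _)
    show ‖_‖ ^ _ = ‖_‖ ^ _
    rw [lp.norm_rpow_eq_tsum two_toReal_pos, lp.norm_rpow_eq_tsum two_toReal_pos]
    have hsupp : Function.support (fun m : ℤ => ‖zfun x m‖ ^ ((2:ℝ≥0∞)).toReal)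
        ⊆ Set.range (Int.ofNat) := by
      intro m hm
      by_contra hcon
      exact hm (zfun_supp x m hcon)
    have htsum := Function.Injective.tsum_eq intNat_inj
      (f := fun m : ℤ => ‖zfun x m‖ ^ ((2:ℝ≥0∞)).toReal) hsupp
    have hL : ∑' (i : ℤ), ‖(lpmkZ (zfun x) (zfun_memℓp x)) i‖ ^ ((2:ℝ≥0∞)).toReal
        = ∑' (m : ℤ), ‖zfun x m‖ ^ ((2:ℝ≥0∞)).toReal := by
      congr 1
    rw [hL, ← htsum]
    congr 1

/-- The isometric embedding of `ℓ²(ℕ)` onto the Hardy space inside `L²` of the circle. -/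
def Lmap : H →ₗᵢ[ℂ] Lp ℂ 2 μc :=
  ((fourierBasis (T := 1)).repr.symm.toLinearIsometry).comp zextli

def Lfn (x : H) : AddCircle (1:ℝ) → ℂ := ⇑(Lmap x)

lemma Lmap_apply (x : H) : Lmap x = (fourierBasis (T := 1)).repr.symm (zextli x) := rfl

lemma L_coeff (x : H) (m : ℤ) : fourierCoeff (Lfn x) m = zfun x m := by
  have h1 := fourierBasis_repr (T := 1) (Lmap x) m
  have h2 : (fourierBasis (T := 1)).repr (Lmap x) = zextli x := by
    rw [Lmap_apply]
    exact (fourierBasis (T := 1)).repr.apply_symm_apply _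
  have h3 : fourierCoeff (Lfn x) m = fourierCoeff (↑↑(Lmap x) : AddCircle (1:ℝ) → ℂ) m := rfl
  rw [h3, ← h1, h2]
  rfl

end Embed


/-! ### Multiplication by characters and the core rigidity lemma -/

section Core

open AddCircle

lemma memLp_fourierMul (n : ℤ) (F : Lp ℂ 2 μc) :
    MemLp (fun t => fourier n t * F t) 2 μc := by
  apply MemLp.of_le (Lp.memLp F)
  · exact (fourier n).continuous.aestronglyMeasurable.mul (Lp.aestronglyMeasurable F)
  · filter_upwards with t
    rw [norm_mul, norm_fourier_apply, one_mul]

lemma memLp_fourierMul' (n : ℤ) (x : H) :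
    MemLp (fun t => fourier n t * Lfn x t) 2 μc := memLp_fourierMul n (Lmap x)

lemma fourierCoeff_congr_ae {f g : AddCircle (1:ℝ) → ℂ} (h : f =ᵐ[μc] g) (m : ℤ) :
    fourierCoeff f m = fourierCoeff g m := by
  rw [fourierCoeff, fourierCoeff]
  apply integral_congr_ae
  filter_upwards [h] with t ht
  rw [ht]

lemma fourierCoeff_fourierMul (n m : ℤ) (F : AddCircle (1:ℝ) → ℂ) :
    fourierCoeff (fun t => fourier n t * F t) m = fourierCoeff F (m - n) := by
  rw [fourierCoeff, fourierCoeff]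
  congr 1
  funext t
  rw [smul_eq_mul, smul_eq_mul, ← mul_assoc, ← fourier_add]
  congr 2
  ring

lemma toLp_fourierMul (n : ℕ) (x : H) :
    MemLp.toLp (fun t => fourier (n:ℤ) t * Lfn x t) (memLp_fourierMul' (n:ℤ) x)
      = Lmap ((Vc ^ n) x) := by
  apply (fourierBasis (T := 1)).repr.injective
  apply lp.ext
  funext m
  rw [fourierBasis_repr, fourierBasis_repr]
  have h1 : fourierCoeff (↑↑(MemLp.toLp (fun t => fourier (n:ℤ) t * Lfn x t)
      (memLp_fourierMul' (n:ℤ) x)) : AddCircle (1:ℝ) → ℂ) m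
      = fourierCoeff (fun t => fourier (n:ℤ) t * Lfn x t) m :=
    fourierCoeff_congr_ae (MemLp.coeFn_toLp _) m
  have h2 : fourierCoeff (↑↑(Lmap ((Vc ^ n) x)) : AddCircle (1:ℝ) → ℂ) m
      = zfun ((Vc ^ n) x) m := L_coeff _ m
  rw [h1, h2, fourierCoeff_fourierMul, L_coeff]
  show (if 0 ≤ m - (n:ℤ) then (x : ℕ → ℂ) (m - (n:ℤ)).toNat else 0)
      = if 0 ≤ m then ((Vc ^ n) x : ℕ → ℂ) m.toNat else 0
  by_cases hm : 0 ≤ m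
  · rw [if_pos hm, Vpow_coord]
    by_cases h2 : 0 ≤ m - (n:ℤ)
    · rw [if_pos h2, if_neg (by omega : ¬ m.toNat < n)]
      have harith : (m - (n:ℤ)).toNat = m.toNat - n := by omega
      rw [harith]
    · rw [if_neg h2, if_pos (by omega : m.toNat < n)]
  · rw [if_neg hm, if_neg (by omega : ¬ (0:ℤ) ≤ m - n)]

lemma corr_coeff (a b : H) (n : ℕ) :
    fourierCoeff (fun t => conj (Lfn a t) * Lfn b t) (n:ℤ) = ⟪(Vc ^ n) a, b⟫ := by
  have h1 : ∀ t : AddCircle (1:ℝ), (fourier (-(n:ℤ)) t) • (conj (Lfn a t) * Lfn b t)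
      = @inner ℂ _ _ (fourier (n:ℤ) t * Lfn a t) (Lfn b t) := by
    intro t
    rw [RCLike.inner_apply, smul_eq_mul, map_mul, fourier_neg]
    ring
  rw [fourierCoeff]
  rw [show (∫ t, fourier (-(n:ℤ)) t • (conj (Lfn a t) * Lfn b t) ∂μc)
      = ∫ t, @inner ℂ _ _ (fourier (n:ℤ) t * Lfn a t) (Lfn b t) ∂μc by
    congr 1; funext t; exact h1 t]
  have h3 : (∫ t, @inner ℂ _ _ (fourier (n:ℤ) t * Lfn a t) (Lfn b t) ∂μc)
      = @inner ℂ _ _ (MemLp.toLp (fun t => fourier (n:ℤ) t * Lfn a t)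
          (memLp_fourierMul' (n:ℤ) a)) (Lmap b) := by
    rw [L2.inner_def]
    apply integral_congr_ae
    filter_upwards [MemLp.coeFn_toLp (memLp_fourierMul' (n:ℤ) a)] with t ht
    rw [ht]
    rfl
  rw [h3, toLp_fourierMul n a, LinearIsometry.inner_map_map]

lemma corr_coeff_neg (a b : H) (n : ℕ) :
    fourierCoeff (fun t => conj (Lfn a t) * Lfn b t) (-(n:ℤ))
      = conj (fourierCoeff (fun t => conj (Lfn b t) * Lfn a t) (n:ℤ)) := by
  rw [fourierCoeff, fourierCoeff, ← integral_conj]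
  congr 1
  funext t
  rw [smul_eq_mul, smul_eq_mul, neg_neg, map_mul, map_mul]
  rw [show conj (fourier (-(n:ℤ)) t) = fourier (n:ℤ) t by
    rw [fourier_neg, Complex.conj_conj]]
  rw [Complex.conj_conj]
  ring

lemma corr_integrable (a b : H) :
    Integrable (fun t => conj (Lfn a t) * Lfn b t) μc := by
  have := L2.integrable_inner (𝕜 := ℂ) (Lmap a) (Lmap b)
  apply this.congr
  filter_upwards with t
  rw [RCLike.inner_apply']
  rfl

lemma corr_vanish (a b : H)
    (hab : ∀ n : ℕ, 1 ≤ n → ⟪(Vc ^ n) a, b⟫ = 0)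
    (hba : ∀ n : ℕ, 1 ≤ n → ⟪(Vc ^ n) b, a⟫ = 0) :
    ∀ m : ℤ, m ≠ 0 → fourierCoeff (fun t => conj (Lfn a t) * Lfn b t) m = 0 := by
  intro m hm
  rcases lt_or_gt_of_ne hm with hneg | hpos
  · have hrw : m = -(((-m).toNat : ℕ) : ℤ) := by omega
    rw [hrw, corr_coeff_neg a b, corr_coeff b a, hba _ (by omega), map_zero]
  · have hrw : m = ((m.toNat : ℕ) : ℤ) := by omega
    rw [hrw, corr_coeff a b, hab _ (by omega)]

/-- The core rigidity lemma: two wandering vectors for the shift are proportional. -/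
lemma core_dependent (f g : H) (hf : f ≠ 0)
    (hff : ∀ n : ℕ, 1 ≤ n → ⟪(Vc ^ n) f, f⟫ = 0)
    (hfg : ∀ n : ℕ, 1 ≤ n → ⟪(Vc ^ n) f, g⟫ = 0)
    (hgf : ∀ n : ℕ, 1 ≤ n → ⟪(Vc ^ n) g, f⟫ = 0) :
    ∃ c : ℂ, g = c • f := by
  have h0ff : fourierCoeff (fun t => conj (Lfn f t) * Lfn f t) 0 = ⟪f, f⟫ := by
    have := corr_coeff f f 0
    simpa using this
  have h0fg : fourierCoeff (fun t => conj (Lfn f t) * Lfn g t) 0 = ⟪f, g⟫ := by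
    have := corr_coeff f g 0
    simpa using this
  have hcf := ae_const_of_fourierCoeff (corr_integrable f f) (corr_vanish f f hff hff)
  have hcfg := ae_const_of_fourierCoeff (corr_integrable f g) (corr_vanish f g hfg hgf)
  have hffne : ⟪f, f⟫ ≠ 0 := fun hcon => hf (inner_self_eq_zero.1 hcon)
  set c := ⟪f, g⟫ / ⟪f, f⟫ with hcdef
  have hae : (Lfn g) =ᵐ[μc] fun t => c * Lfn f t := by
    filter_upwards [hcf, hcfg] with t ht1 ht2
    rw [h0ff] at ht1
    rw [h0fg] at ht2
    have hFt : conj (Lfn f t) ≠ 0 := by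
      intro h0
      rw [h0, zero_mul] at ht1
      exact hffne ht1.symm
    have hF : Lfn f t ≠ 0 := by
      intro h0
      rw [h0, mul_zero] at ht1
      exact hffne ht1.symm
    have hprod : conj (Lfn f t) * Lfn f t ≠ 0 := mul_ne_zero hFt hF
    rw [hcdef, ← ht1, ← ht2, div_mul_eq_mul_div, eq_div_iff hprod]
    ring
  have hLp : Lmap g = c • Lmap f := by
    apply Lp.ext
    have hsm := Lp.coeFn_smul c (Lmap f)
    filter_upwards [hae, hsm] with t ht1 ht2
    show Lfn g t = _
    rw [ht1, ht2]
    rfl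
  have : Lmap g = Lmap (c • f) := by rw [hLp, _root_.map_smul]
  exact ⟨c, Lmap.injective this⟩

end Core


end Beurling

set_option maxHeartbeats 2000000 in
/-- Beurling-type theorem: the wandering subspace `M ⊖ T M` of a nonzero closed
`T_{α,β}`-invariant subspace `M` is one-dimensional. -/
theorem wandering_subspace_dim_one (α β : ℂ) (hα : α ≠ 0) (hβ : β ≠ 0)
    (hnorm : ‖α‖ ^ 2 + ‖β‖ ^ 2 = 1)
    (T : H →L[ℂ] H)
    (hT0 : T (e 0) = (α * conj β) • e 0 + β • e 1)
    (hTn : ∀ n : ℕ, 1 ≤ n → T (e n) = e (n + 1))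
    (M : Submodule ℂ H) (hMcl : IsClosed (M : Set H)) (hMne : M ≠ ⊥)
    (hMinv : Submodule.map (T : H →ₗ[ℂ] H) M ≤ M) :
    Module.finrank ℂ ↥(M ⊓ (Submodule.map (T : H →ₗ[ℂ] H) M)ᗮ) = 1 := by
  classical
  open Beurling in
  set l : ℂ := α * conj β with hldef
  have hl : ‖l‖ < 1 := by
    have h1 : ‖l‖ = ‖α‖ * ‖β‖ := by
      rw [hldef, norm_mul, Complex.norm_conj]
    have ha : 0 < ‖α‖ := norm_pos_iff.2 hα
    have hb' : 0 < ‖β‖ := norm_pos_iff.2 hβ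
    rw [h1]
    nlinarith [sq_nonneg (‖α‖ - ‖β‖)]
  set Q : H →L[ℂ] H := ((Beurling.Qu β l hβ hl : (H →L[ℂ] H)ˣ) : H →L[ℂ] H) with hQdef
  set Qi : H →L[ℂ] H := (((Beurling.Qu β l hβ hl)⁻¹ : (H →L[ℂ] H)ˣ) : H →L[ℂ] H) with hQidef
  have hQQi : ∀ x, Q (Qi x) = x := fun x => by
    rw [hQdef, hQidef, ← ContinuousLinearMap.mul_apply, Units.mul_inv,
      ContinuousLinearMap.one_apply]
  have hQiQ : ∀ x, Qi (Q x) = x := fun x => by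
    rw [hQdef, hQidef, ← ContinuousLinearMap.mul_apply, Units.inv_mul,
      ContinuousLinearMap.one_apply]
  have hTQ : ∀ x, T (Q x) = Q (Beurling.Vc x) := fun x =>
    Beurling.TQ_comm β l hβ hl T (hldef ▸ hT0) hTn x
  have hTx : ∀ x, T x = Q (Beurling.Vc (Qi x)) := fun x => by rw [← hTQ (Qi x), hQQi]
  set K := Submodule.map (T : H →ₗ[ℂ] H) M with hK
  set N := Submodule.map (Qi : H →ₗ[ℂ] H) M with hN
  have hmemN : ∀ x, x ∈ N ↔ Q x ∈ M := by
    intro x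
    constructor
    · rintro ⟨m, hm, rfl⟩
      rw [ContinuousLinearMap.coe_coe, hQQi]
      exact hm
    · intro h
      exact ⟨Q x, h, hQiQ x⟩
  have hmemNQ : ∀ x, Qi x ∈ N ↔ x ∈ M := fun x => by rw [hmemN, hQQi]
  have hNcl : IsClosed (N : Set H) := by
    have hset : (N : Set H) = Q ⁻¹' (M : Set H) := Set.ext fun x => hmemN x
    rw [hset]
    exact hMcl.preimage Q.continuous
  have hNinv : Submodule.map (Beurling.Vc : H →ₗ[ℂ] H) N ≤ N := by
    rintro _ ⟨x, hx, rfl⟩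
    rw [hmemN, ContinuousLinearMap.coe_coe, ← hTQ x]
    exact hMinv ⟨Q x, (hmemN x).1 hx, rfl⟩
  set KV := Submodule.map (Beurling.Vc : H →ₗ[ℂ] H) N with hKV
  have hNcomp : IsComplete (N : Set H) := hNcl.isComplete
  have hKVcomp : IsComplete (KV : Set H) := by
    have himg : (KV : Set H) = Beurling.Vc '' (N : Set H) := by
      ext x
      simp [hKV, Submodule.mem_map]
    rw [himg]
    exact (isComplete_image_iff Beurling.Vli.isometry.isUniformInducing).2 hNcomp
  have hKVcl : IsClosed (KV : Set H) := hKVcomp.isClosed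
  haveI : CompleteSpace KV := hKVcl.completeSpace_coe
  have hQKV : ∀ y, y ∈ K ↔ Qi y ∈ KV := by
    intro y
    constructor
    · rintro ⟨m, hm, rfl⟩
      have h2 : Qi (T m) = Beurling.Vc (Qi m) := by rw [hTx m, hQiQ]
      rw [ContinuousLinearMap.coe_coe, h2]
      exact ⟨Qi m, (hmemNQ m).2 hm, rfl⟩
    · rintro ⟨x, hx, hxy⟩
      have hy : y = T (Q x) := by rw [ContinuousLinearMap.coe_coe] at hxy; rw [hTQ x, hxy, hQQi]
      rw [hy]
      exact ⟨Q x, (hmemN x).1 hx, rfl⟩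
  have hKcl : IsClosed (K : Set H) := by
    have hset : (K : Set H) = Qi ⁻¹' (KV : Set H) := Set.ext fun y => hQKV y
    rw [hset]
    exact hKVcl.preimage Qi.continuous
  haveI : CompleteSpace K := hKcl.completeSpace_coe
  have hKM : K ≤ M := hMinv
  have hMK : M ≠ K := by
    intro hcon
    apply hMne
    rw [Submodule.eq_bot_iff]
    have hcoord : ∀ n : ℕ, ∀ x ∈ M, ∀ k, k < n → (Qi x) k = 0 := by
      intro n
      induction n with
      | zero => intro x hx k hk; omega
      | succ n ih =>
          intro x hx k hk
          have hxK : x ∈ K := hcon ▸ hx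
          rcases hxK with ⟨z, hz, rfl⟩
          have h2 : Qi (T z) = Beurling.Vc (Qi z) := by rw [hTx z, hQiQ]
          rw [ContinuousLinearMap.coe_coe, h2]
          cases k with
          | zero => exact Beurling.Vc_apply_zero _
          | succ j =>
              rw [Beurling.Vc_apply_succ]
              exact ih z hz j (by omega)
    intro x hx
    have hQix : Qi x = 0 := by
      apply lp.ext
      funext k
      have hz : ((0:H) : ℕ → ℂ) k = 0 := rfl
      rw [hz]
      exact hcoord (k+1) x hx k (by omega)
    have h3 := congrArg Q hQix
    rw [hQQi] at h3
    rw [h3, map_zero]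
  set W := M ⊓ Kᗮ with hW
  have hWne : ∃ f, f ∈ W ∧ f ≠ 0 := by
    by_contra hcon
    push_neg at hcon
    apply hMK
    apply le_antisymm ?_ hKM
    intro x hx
    have hxw : x - (Submodule.orthogonalProjection K x : H) ∈ W :=
      Submodule.mem_inf.2 ⟨Submodule.sub_mem M hx (hKM (Submodule.orthogonalProjection K x).2),
        Submodule.sub_starProjection_mem_orthogonal x⟩
    have hz : x - (Submodule.orthogonalProjection K x : H) = 0 := hcon _ hxw
    have hxp : x = (Submodule.orthogonalProjection K x : H) := by rwa [sub_eq_zero] at hz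
    rw [hxp]
    exact (Submodule.orthogonalProjection K x).2
  obtain ⟨f₀, hf₀W, hf₀⟩ := hWne
  have hdep : ∀ f g : H, f ∈ W → g ∈ W → f ≠ 0 → ∃ c : ℂ, g = c • f := by
    intro f g hfW hgW hfne
    obtain ⟨hfM, hfO⟩ := Submodule.mem_inf.1 hfW
    obtain ⟨hgM, hgO⟩ := Submodule.mem_inf.1 hgW
    set x := Qi f with hxdef
    set y := Qi g with hydef
    have hxN : x ∈ N := (hmemNQ f).2 hfM
    have hyN : y ∈ N := (hmemNQ g).2 hgM
    set px := (Submodule.orthogonalProjection KV x : H) with hpxdef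
    set py := (Submodule.orthogonalProjection KV y : H) with hpydef
    have hpxKV : px ∈ KV := (Submodule.orthogonalProjection KV x).2
    have hpyKV : py ∈ KV := (Submodule.orthogonalProjection KV y).2
    have hKVN : KV ≤ N := hNinv
    set f' := x - px with hf'def
    set g' := y - py with hg'def
    have hf'N : f' ∈ N := Submodule.sub_mem N hxN (hKVN hpxKV)
    have hg'N : g' ∈ N := Submodule.sub_mem N hyN (hKVN hpyKV)
    have hf'O : f' ∈ KVᗮ := Submodule.sub_starProjection_mem_orthogonal x
    have hg'O : g' ∈ KVᗮ := Submodule.sub_starProjection_mem_orthogonal y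
    have hVn : ∀ (w : H), w ∈ N → ∀ n : ℕ, 1 ≤ n → (Beurling.Vc ^ n) w ∈ KV := by
      intro w hw n hn
      induction n with
      | zero => omega
      | succ n ih =>
          by_cases h1 : 1 ≤ n
          · have h2 := ih h1
            rw [pow_succ', ContinuousLinearMap.mul_apply]
            exact ⟨(Beurling.Vc ^ n) w, hKVN h2, rfl⟩
          · have hn0 : n = 0 := by omega
            subst hn0
            rw [pow_one]
            exact ⟨w, hw, rfl⟩
    have hOrth : ∀ (u v : H), u ∈ N → v ∈ KVᗮ → ∀ n : ℕ, 1 ≤ n →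
        @inner ℂ _ _ ((Beurling.Vc ^ n) u) v = 0 := by
      intro u v hu hv n hn
      exact (Submodule.mem_orthogonal KV v).1 hv _ (hVn u hu n hn)
    have hf'ne : f' ≠ 0 := by
      intro h0
      apply hfne
      have hxKV : x ∈ KV := by
        have hxp : x = px := by rwa [sub_eq_zero] at h0
        rw [hxp]
        exact hpxKV
      have hfK : f ∈ K := (hQKV f).2 hxKV
      have h3 : @inner ℂ _ _ f f = 0 := (Submodule.mem_orthogonal K f).1 hfO f hfK
      exact inner_self_eq_zero.1 h3
    obtain ⟨c, hc⟩ := Beurling.core_dependent f' g' hf'ne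
      (fun n hn => hOrth f' f' hf'N hf'O n hn)
      (fun n hn => hOrth f' g' hf'N hg'O n hn)
      (fun n hn => hOrth g' f' hg'N hf'O n hn)
    have hyx : y - c • x ∈ KV := by
      have hsplit : y - c • x = (py - c • px) + (g' - c • f') := by
        rw [hg'def, hf'def, smul_sub]
        abel
      rw [hsplit, hc, sub_self, add_zero]
      exact Submodule.sub_mem KV hpyKV (Submodule.smul_mem KV c hpxKV)
    have hgfK : g - c • f ∈ K := by
      rw [hQKV]
      have h4 : Qi (g - c • f) = y - c • x := by
        rw [map_sub, _root_.map_smul]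
      rw [h4]
      exact hyx
    have hgfW : g - c • f ∈ Kᗮ :=
      Submodule.sub_mem _ hgO (Submodule.smul_mem _ c hfO)
    have hzero : g - c • f = 0 := by
      have h0 : @inner ℂ _ _ (g - c • f) (g - c • f) = 0 :=
        (Submodule.mem_orthogonal K _).1 hgfW _ hgfK
      exact inner_self_eq_zero.1 h0
    exact ⟨c, by rwa [sub_eq_zero] at hzero⟩
  set v : ↥W := ⟨f₀, hf₀W⟩ with hv
  have hvne : v ≠ 0 := by
    intro hcon
    apply hf₀
    have := congrArg (Subtype.val) hcon
    exact this
  have hspan : ∀ w : ↥W, ∃ c : ℂ, c • v = w := by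
    intro w
    obtain ⟨c, hc⟩ := hdep f₀ w.1 hf₀W w.2 hf₀
    refine ⟨c, ?_⟩
    apply Subtype.ext
    show c • f₀ = (w : H)
    exact hc.symm
  exact finrank_eq_one v hvne hspan

end
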